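/- Let G be a connected graph with a dominating clique K and a positive weight function w such that s(G,w) < cs(G,w), and let S be a minimum weighted safe set of (G,w). Then (i) each of the sets S∖K, K∖S, and S∩K is nonempty, and (ii) each component of G[S] is adjacent to at least two components of G−S. -/

import Mathlib

open SimpleGraph
open scoped Classical

variable {V : Type*} [Fintype V]

noncomputable def setWeight (w : V → ℝ) (A : Set V) : ℝ :=
  ∑ v : V, if v ∈ A then w v else 0

def IsComponentOf (G : SimpleGraph V) (S C : Set V) : Prop :=
  ∃ c : (G.induce S).ConnectedComponent,
    C = Subtype.val '' {x : ↥S | (G.induce S).connectedComponentMk x = c}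

def Touches (G : SimpleGraph V) (C D : Set V) : Prop :=
  ∃ a ∈ C, ∃ b ∈ D, G.Adj a b

def IsSafeSet (G : SimpleGraph V) (w : V → ℝ) (S : Set V) : Prop :=
  S.Nonempty ∧ S ≠ Set.univ ∧
    ∀ C D : Set V, IsComponentOf G S C → IsComponentOf G Sᶜ D → Touches G C D →
      setWeight w D ≤ setWeight w C

def IsConnSafeSet (G : SimpleGraph V) (w : V → ℝ) (S : Set V) : Prop :=
  IsSafeSet G w S ∧ (G.induce S).Connected

noncomputable def safeNumber (G : SimpleGraph V) (w : V → ℝ) : ℝ :=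
  sInf (setWeight w '' {S | IsSafeSet G w S})

noncomputable def connSafeNumber (G : SimpleGraph V) (w : V → ℝ) : ℝ :=
  sInf (setWeight w '' {S | IsConnSafeSet G w S})

def InGcs (G : SimpleGraph V) : Prop :=
  ∀ w : V → ℝ, (∀ v, 0 < w v) → safeNumber G w = connSafeNumber G w

namespace SafeAux

variable {V : Type*} [Fintype V]

/-- Reachability within a set `A`, as a relation on ambient vertices. -/
def Rel (G : SimpleGraph V) (A : Set V) : V → V → Prop :=
  Relation.ReflTransGen (fun u v => u ∈ A ∧ v ∈ A ∧ G.Adj u v)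

variable {G : SimpleGraph V} {A B P C X T : Set V} {x y z u v : V} {w : V → ℝ}

lemma Rel.refl (x : V) : Rel G A x x := Relation.ReflTransGen.refl

lemma rel_adj (hx : x ∈ A) (hy : y ∈ A) (h : G.Adj x y) : Rel G A x y :=
  Relation.ReflTransGen.single ⟨hx, hy, h⟩

lemma Rel.trans (h : Rel G A x y) (h' : Rel G A y z) : Rel G A x z :=
  Relation.ReflTransGen.trans h h'

lemma Rel.symm (h : Rel G A x y) : Rel G A y x :=
  (@Relation.ReflTransGen.stdSymm _ _ ⟨fun _ _ h => ⟨h.2.1, h.1, h.2.2.symm⟩⟩).symm _ _ h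

lemma rel_mono (hAB : A ⊆ B) (h : Rel G A x y) : Rel G B x y :=
  Relation.ReflTransGen.mono (fun _ _ h => ⟨hAB h.1, hAB h.2.1, h.2.2⟩) _ _ h

lemma rel_closed_mem (hP : ∀ u v, u ∈ P → v ∈ A → G.Adj u v → v ∈ P)
    (hx : x ∈ P) (h : Rel G A x y) : y ∈ P := by
  induction h with
  | refl => exact hx
  | tail _ h ih => exact hP _ _ ih h.2.1 h.2.2

lemma rel_mem (hx : x ∈ A) (h : Rel G A x y) : y ∈ A :=
  rel_closed_mem (fun _ _ _ hv _ => hv) hx h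

lemma rel_strengthen (hP : ∀ u v, u ∈ P → v ∈ A → G.Adj u v → v ∈ P)
    (hx : x ∈ P) (h : Rel G A x y) : Rel G P x y := by
  induction h with
  | refl => exact Rel.refl x
  | tail hxz h ih =>
      exact ih.trans (rel_adj (rel_closed_mem hP hx hxz) (hP _ _ (rel_closed_mem hP hx hxz) h.2.1 h.2.2) h.2.2)

lemma reachable_of_rel (hx : x ∈ A) (hy : y ∈ A) (h : Rel G A x y) :
    (G.induce A).Reachable ⟨x, hx⟩ ⟨y, hy⟩ := by
  induction h with
  | refl => exact Reachable.refl _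
  | @tail b c hab hbc ih =>
      exact (ih hbc.1).trans (SimpleGraph.Adj.reachable (by exact hbc.2.2 : (G.induce A).Adj ⟨b, hbc.1⟩ ⟨c, hbc.2.1⟩))

lemma rel_of_reachable {u v : ↥A} (h : (G.induce A).Reachable u v) :
    Rel G A u.val v.val := by
  obtain ⟨p⟩ := h
  induction p with
  | nil => exact Rel.refl _
  | @cons a b c hab p ih =>
      exact (rel_adj a.2 b.2 hab).trans ih

/-- Bridge between the quotient-based component definition and `Rel`. -/
lemma isComponentOf_iff :
    IsComponentOf G A C ↔ ∃ x, x ∈ A ∧ C = {y | y ∈ A ∧ Rel G A x y} := by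
  constructor
  · rintro ⟨c, rfl⟩
    obtain ⟨x, rfl⟩ := c.exists_rep
    refine ⟨x.val, x.2, ?_⟩
    ext y
    constructor
    · rintro ⟨z, hz, rfl⟩
      exact ⟨z.2, (rel_of_reachable (ConnectedComponent.eq.mp hz)).symm⟩
    · rintro ⟨hy, hr⟩
      exact ⟨⟨y, hy⟩, ConnectedComponent.eq.mpr (reachable_of_rel x.2 hy hr).symm, rfl⟩
  · rintro ⟨x, hx, rfl⟩
    refine ⟨(G.induce A).connectedComponentMk ⟨x, hx⟩, ?_⟩
    ext y
    constructor
    · rintro ⟨hy, hr⟩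
      exact ⟨⟨y, hy⟩, ConnectedComponent.eq.mpr (reachable_of_rel hy hx hr.symm), rfl⟩
    · rintro ⟨z, hz, rfl⟩
      exact ⟨z.2, (rel_of_reachable (ConnectedComponent.eq.mp hz)).symm⟩

lemma comp_subset (h : IsComponentOf G A C) : C ⊆ A := by
  obtain ⟨x, hx, rfl⟩ := isComponentOf_iff.mp h
  exact fun y hy => hy.1

lemma comp_nonempty (h : IsComponentOf G A C) : C.Nonempty := by
  obtain ⟨x, hx, rfl⟩ := isComponentOf_iff.mp h
  exact ⟨x, hx, Rel.refl x⟩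

lemma comp_closed (h : IsComponentOf G A C) (hu : u ∈ C) (hv : v ∈ A)
    (hadj : G.Adj u v) : v ∈ C := by
  obtain ⟨x, hx, rfl⟩ := isComponentOf_iff.mp h
  exact ⟨hv, hu.2.trans (rel_adj hu.1 hv hadj)⟩

lemma comp_rel_mem (h : IsComponentOf G A C) (hu : u ∈ C) (hr : Rel G A u v) :
    v ∈ C :=
  rel_closed_mem (fun _ _ ha hb hc => comp_closed h ha hb hc) hu hr

lemma comp_eq_of_mem (h : IsComponentOf G A C) (h' : IsComponentOf G A X)
    (hx : x ∈ C) (hx' : x ∈ X) : C = X := by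
  obtain ⟨a, ha, rfl⟩ := isComponentOf_iff.mp h
  obtain ⟨b, hb, rfl⟩ := isComponentOf_iff.mp h'
  ext y
  constructor
  · rintro ⟨hy, hr⟩
    exact ⟨hy, (hx'.2.trans (hx.2.symm.trans hr) : Rel G A b y)⟩
  · rintro ⟨hy, hr⟩
    exact ⟨hy, hx.2.trans (hx'.2.symm.trans hr)⟩

lemma exists_comp (hx : x ∈ A) : ∃ C, IsComponentOf G A C ∧ x ∈ C :=
  ⟨{y | y ∈ A ∧ Rel G A x y}, isComponentOf_iff.mpr ⟨x, hx, rfl⟩, ⟨hx, Rel.refl x⟩⟩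

lemma comp_disjoint (h : IsComponentOf G A C) (h' : IsComponentOf G A X)
    (hne : C ≠ X) : Disjoint C X := by
  rw [Set.disjoint_left]
  intro a haC haX
  exact hne (comp_eq_of_mem h h' haC haX)

/-- A connected (via `Rel`) closed subset containing a point of a component
contains that whole component. -/
lemma comp_subset_of_closed (h : IsComponentOf G A X) (hx : x ∈ X) (hxP : x ∈ P)
    (hP : ∀ u v, u ∈ P → v ∈ A → G.Adj u v → v ∈ P) : X ⊆ P := by
  obtain ⟨a, ha, rfl⟩ := isComponentOf_iff.mp h
  rintro y ⟨hy, hr⟩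
  exact rel_closed_mem hP hxP (hx.2.symm.trans hr)

lemma comp_preconn (h : IsComponentOf G A X) (hx : x ∈ X) (hy : y ∈ X) :
    Rel G X x y := by
  have hclosed : ∀ u v, u ∈ X → v ∈ A → G.Adj u v → v ∈ X :=
    fun _ _ ha hb hc => comp_closed h ha hb hc
  obtain ⟨a, ha, hXeq⟩ := isComponentOf_iff.mp h
  have hr : Rel G A x y := by
    rw [hXeq] at hx hy
    exact hx.2.symm.trans hy.2
  exact rel_strengthen hclosed hx hr

lemma comp_eq_self (h : IsComponentOf G T X)
    (hpre : ∀ x y, x ∈ T → y ∈ T → Rel G T x y) : X = T := by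
  obtain ⟨a, ha, rfl⟩ := isComponentOf_iff.mp h
  ext y
  exact ⟨fun hy => hy.1, fun hy => ⟨hy, hpre a y ha hy⟩⟩

/-- Walking from inside `A` to outside, one crosses the boundary while staying
connected to the start. -/
lemma exists_boundary {x y : V} (p : G.Walk x y) (hx : x ∈ A) (hy : y ∉ A) :
    ∃ u v, u ∈ A ∧ v ∉ A ∧ G.Adj u v ∧ Rel G A x u := by
  induction p with
  | nil => exact absurd hx hy
  | @cons a b c hab p ih =>
      by_cases hb : b ∈ A
      · obtain ⟨u, v, hu, hv, hadj, hr⟩ := ih hb hy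
        exact ⟨u, v, hu, hv, hadj, (rel_adj hx hb hab).trans hr⟩
      · exact ⟨a, b, hx, hb, hab, Rel.refl a⟩

section Weight

lemma setWeight_nonneg (hw : ∀ v, 0 < w v) (A : Set V) : 0 ≤ setWeight w A :=
  Finset.sum_nonneg fun v _ => by
    by_cases h : v ∈ A <;> simp [setWeight, h, (hw v).le]

lemma setWeight_mono (hw : ∀ v, 0 < w v) (h : A ⊆ B) :
    setWeight w A ≤ setWeight w B := by
  refine Finset.sum_le_sum fun v _ => ?_
  by_cases hv : v ∈ A
  · simp [hv, h hv]
  · by_cases hv' : v ∈ B <;> simp [hv, hv', (hw v).le]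

lemma setWeight_pos (hw : ∀ v, 0 < w v) (h : A.Nonempty) : 0 < setWeight w A := by
  obtain ⟨a, ha⟩ := h
  calc (0:ℝ) < w a := hw a
    _ = setWeight w {a} := by
        simp [setWeight, Finset.sum_ite_eq]
    _ ≤ setWeight w A := setWeight_mono hw (by simpa using ha)

lemma setWeight_union (h : Disjoint A B) :
    setWeight w (A ∪ B) = setWeight w A + setWeight w B := by
  rw [setWeight, setWeight, setWeight, ← Finset.sum_add_distrib]
  refine Finset.sum_congr rfl fun v _ => ?_
  by_cases hA : v ∈ A
  · have hB : v ∉ B := fun hB => (Set.disjoint_left.mp h hA) hB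
    simp [hA, hB]
  · by_cases hB : v ∈ B <;> simp [hA, hB]

lemma setWeight_diff (hw : ∀ v, 0 < w v) (h : C ⊆ A) :
    setWeight w (A \ C) = setWeight w A - setWeight w C := by
  have : setWeight w (A \ C ∪ C) = setWeight w (A \ C) + setWeight w C :=
    setWeight_union (Set.disjoint_left.mpr fun a ha => ha.2)
  rw [Set.diff_union_of_subset h] at this
  linarith

lemma setWeight_sUnion (𝓑 : Finset (Set V))
    (hdisj : ∀ X ∈ 𝓑, ∀ Y ∈ 𝓑, X ≠ Y → Disjoint X Y) :
    setWeight w (⋃₀ ↑𝓑) = ∑ X ∈ 𝓑, setWeight w X := by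
  induction 𝓑 using Finset.cons_induction with
  | empty => simp [setWeight]
  | @cons a s ha ih =>
      have hd : Disjoint a (⋃₀ ↑s) := by
        rw [Set.disjoint_sUnion_right]
        intro t ht
        exact hdisj a (Finset.mem_cons_self a s) t (Finset.mem_cons_of_mem ht)
          (fun h => ha (h ▸ ht))
      rw [Finset.coe_cons, Set.sUnion_insert, setWeight_union hd, Finset.sum_cons,
        ih (fun X hX Y hY hne => hdisj X (Finset.mem_cons_of_mem hX) Y (Finset.mem_cons_of_mem hY) hne)]

end Weight

section Main

variable (G : SimpleGraph V) (w : V → ℝ) (S : Set V)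

/-- Any connected safe set of weight at most `setWeight w S` contradicts
`safeNumber < connSafeNumber`. -/
lemma contra (hw : ∀ v, 0 < w v) (hlt : safeNumber G w < connSafeNumber G w)
    (hmin : setWeight w S = safeNumber G w) (T : Set V) (hT : IsSafeSet G w T)
    (hpre : ∀ x y, x ∈ T → y ∈ T → Rel G T x y)
    (hle : setWeight w T ≤ setWeight w S) : False := by
  have hconn : (G.induce T).Connected := by
    rw [SimpleGraph.connected_iff]
    refine ⟨fun u v => ?_, hT.1.to_subtype⟩
    have := reachable_of_rel u.2 v.2 (hpre u.val v.val u.2 v.2)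
    simpa using this
  have hmem : setWeight w T ∈ setWeight w '' {T' | IsConnSafeSet G w T'} :=
    ⟨T, ⟨hT, hconn⟩, rfl⟩
  have hbdd : BddBelow (setWeight w '' {T' | IsConnSafeSet G w T'}) := by
    refine ⟨0, ?_⟩
    rintro r ⟨T', _, rfl⟩
    exact setWeight_nonneg hw T'
  have h1 : connSafeNumber G w ≤ setWeight w T := csInf_le hbdd hmem
  rw [hmin] at hle
  linarith

lemma isSafeSet_of_conn (hT1 : T.Nonempty) (hT2 : T ≠ Set.univ)
    (hpre : ∀ x y, x ∈ T → y ∈ T → Rel G T x y)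
    (hcomp : ∀ X, IsComponentOf G Tᶜ X → setWeight w X ≤ setWeight w T) :
    IsSafeSet G w T :=
  ⟨hT1, hT2, fun C D hC hD _ => by
    rw [comp_eq_self hC hpre]; exact hcomp D hD⟩

/-- If the complement of a minimum safe set is `Rel`-preconnected, we get a
contradiction. -/
lemma onecomp (hG : G.Connected) (hw : ∀ v, 0 < w v)
    (hlt : safeNumber G w < connSafeNumber G w) (hS : IsSafeSet G w S)
    (hmin : setWeight w S = safeNumber G w)
    (hpre : ∀ x y, x ∈ Sᶜ → y ∈ Sᶜ → Rel G Sᶜ x y)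
    (hSnc : ¬ ∀ x y, x ∈ S → y ∈ S → Rel G S x y) : False := by
  obtain ⟨z, hz⟩ := Set.ne_univ_iff_exists_notMem S |>.mp hS.2.1
  have hzc : z ∈ Sᶜ := hz
  -- Sᶜ is a single component
  have hDcomp : IsComponentOf G Sᶜ Sᶜ := by
    refine isComponentOf_iff.mpr ⟨z, hzc, ?_⟩
    ext y
    exact ⟨fun hy => ⟨hy, hpre z y hzc hy⟩, fun hy => hy.1⟩
  -- every component of S has a boundary edge to Sᶜ
  have hbound : ∀ C, IsComponentOf G S C → ∃ u v, u ∈ C ∧ v ∈ Sᶜ ∧ G.Adj u v := by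
    intro C hC
    obtain ⟨x, hx⟩ := comp_nonempty hC
    obtain ⟨p⟩ := hG.preconnected x z
    obtain ⟨u, v, hu, hv, hadj, hr⟩ := exists_boundary p (comp_subset hC hx) hz
    exact ⟨u, v, comp_rel_mem hC hx hr, hv, hadj⟩
  have htouch : ∀ C, IsComponentOf G S C → setWeight w Sᶜ ≤ setWeight w C := by
    intro C hC
    obtain ⟨u, v, hu, hv, hadj⟩ := hbound C hC
    exact hS.2.2 C Sᶜ hC hDcomp ⟨u, hu, v, hv, hadj⟩
  -- two distinct components of S
  push_neg at hSnc
  obtain ⟨x₀, y₀, hx₀, hy₀, hnr⟩ := hSnc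
  obtain ⟨Cx, hCx, hxCx⟩ := exists_comp (G := G) hx₀
  obtain ⟨Cy, hCy, hyCy⟩ := exists_comp (G := G) hy₀
  have hCxy : Cx ≠ Cy := by
    rintro rfl
    exact hnr (rel_mono (comp_subset hCx) (comp_preconn hCx hxCx hyCy))
  -- pick minimum weight component
  have hfin : {C | IsComponentOf G S C}.Finite := Set.toFinite _
  obtain ⟨Cm, hCm, hCmmin⟩ :=
    Set.exists_min_image {C | IsComponentOf G S C} (setWeight w) hfin ⟨Cx, hCx⟩
  have hCm' : IsComponentOf G S Cm := hCm
  -- a second component distinct from Cm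
  obtain ⟨C₂, hC₂, hC₂ne⟩ : ∃ C₂, IsComponentOf G S C₂ ∧ C₂ ≠ Cm := by
    by_cases h : Cx = Cm
    · exact ⟨Cy, hCy, fun he => hCxy (h.trans he.symm)⟩
    · exact ⟨Cx, hCx, h⟩
  set T : Set V := (S \ Cm) ∪ Sᶜ with hTdef
  have hC₂sub : C₂ ⊆ S \ Cm := fun q hq =>
    ⟨comp_subset hC₂ hq, fun hqm => hC₂ne (comp_eq_of_mem hC₂ hCm' hq hqm)⟩
  have hTc : Tᶜ = Cm := by
    ext p
    simp only [Set.mem_compl_iff]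
    constructor
    · intro hp
      have h1 : p ∉ (S \ Cm) := fun h => hp (Or.inl h)
      have h2 : p ∈ S := not_not.mp (fun h => hp (Or.inr h))
      by_contra hpc
      exact h1 ⟨h2, hpc⟩
    · intro hp hcon
      rcases hcon with h | h
      · exact h.2 hp
      · exact h (comp_subset hCm' hp)
  have hTpre : ∀ x y, x ∈ T → y ∈ T → Rel G T x y := by
    have key : ∀ p, p ∈ T → Rel G T p z := by
      intro p hp
      rcases hp with hp | hp
      · -- p ∈ S \ Cm
        obtain ⟨Cp, hCp, hpCp⟩ := exists_comp (G := G) hp.1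
        have hCpne : Cp ≠ Cm := fun he => hp.2 (he ▸ hpCp)
        have hCpsub : Cp ⊆ S \ Cm := fun q hq =>
          ⟨comp_subset hCp hq, fun hqm => hCpne (comp_eq_of_mem hCp hCm' hq hqm)⟩
        obtain ⟨u, v, hu, hv, hadj⟩ := hbound Cp hCp
        have h1 : Rel G T p u :=
          rel_mono (hCpsub.trans Set.subset_union_left)
            (comp_preconn hCp hpCp hu)
        have h2 : Rel G T u v :=
          rel_adj (Set.subset_union_left (hCpsub hu)) (Set.subset_union_right hv) hadj
        have h3 : Rel G T v z :=
          rel_mono Set.subset_union_right (hpre v z hv hzc)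
        exact (h1.trans h2).trans h3
      · exact rel_mono Set.subset_union_right (hpre p z hp hzc)
    intro x y hx hy
    exact (key x hx).trans (key y hy).symm
  have hCm_ne : Cm.Nonempty := comp_nonempty hCm'
  obtain ⟨m, hm⟩ := hCm_ne
  have hTsafe : IsSafeSet G w T := by
    refine isSafeSet_of_conn G w ⟨z, Or.inr hzc⟩ ?_ hTpre ?_
    · intro h
      have : m ∈ T := h ▸ Set.mem_univ m
      rw [← Set.notMem_compl_iff, hTc] at this
      exact this hm
    · intro X hX
      have hXsub : X ⊆ Cm := hTc ▸ comp_subset hX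
      calc setWeight w X ≤ setWeight w Cm := setWeight_mono hw hXsub
        _ ≤ setWeight w C₂ := hCmmin C₂ hC₂
        _ ≤ setWeight w T := setWeight_mono hw (hC₂sub.trans Set.subset_union_left)
  have hwT : setWeight w T = setWeight w S - setWeight w Cm + setWeight w Sᶜ := by
    rw [hTdef, setWeight_union (Set.disjoint_left.mpr fun a ha hac => (Set.mem_compl_iff _ _).mp hac ha.1),
      setWeight_diff hw (comp_subset hCm')]
  have hle : setWeight w T ≤ setWeight w S := by
    have := htouch Cm hCm'
    rw [hwT]; linarith
  exact contra G w S hw hlt hmin T hTsafe hTpre hle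

end Main

end SafeAux

open SafeAux

theorem stmt_13 (G : SimpleGraph V) (hG : G.Connected) (K : Set V)
    (hK : G.IsClique K) (hdom : ∀ v ∉ K, ∃ u ∈ K, G.Adj v u)
    (w : V → ℝ) (hw : ∀ v, 0 < w v)
    (hlt : safeNumber G w < connSafeNumber G w) (S : Set V)
    (hS : IsSafeSet G w S) (hmin : setWeight w S = safeNumber G w) :
    ((S \ K).Nonempty ∧ (K \ S).Nonempty ∧ (S ∩ K).Nonempty) ∧
    (∀ C : Set V, IsComponentOf G S C →
      ∃ D₁ D₂ : Set V, IsComponentOf G Sᶜ D₁ ∧ IsComponentOf G Sᶜ D₂ ∧ D₁ ≠ D₂ ∧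
        Touches G C D₁ ∧ Touches G C D₂) := by
  classical
  -- S is not connected
  have hSnc : ¬ ∀ x y, x ∈ S → y ∈ S → Rel G S x y := by
    intro h
    exact contra G w S hw hlt hmin S hS h le_rfl
  obtain ⟨z, hz⟩ := Set.ne_univ_iff_exists_notMem S |>.mp hS.2.1
  have hzc : z ∈ Sᶜ := hz
  have hbound : ∀ C, IsComponentOf G S C → ∃ u v, u ∈ C ∧ v ∈ Sᶜ ∧ G.Adj u v := by
    intro C hC
    obtain ⟨x, hx⟩ := comp_nonempty hC
    obtain ⟨p⟩ := hG.preconnected x z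
    obtain ⟨u, v, hu, hv, hadj, hr⟩ := exists_boundary p (comp_subset hC hx) hz
    exact ⟨u, v, comp_rel_mem hC hx hr, hv, hadj⟩
  -- (i)(a)
  have hia : (S \ K).Nonempty := by
    rw [Set.nonempty_iff_ne_empty]
    intro he
    have hSK : S ⊆ K := Set.diff_eq_empty.mp he
    apply hSnc
    intro x y hx hy
    rcases eq_or_ne x y with rfl | hne
    · exact Rel.refl x
    · exact rel_adj hx hy (hK (hSK hx) (hSK hy) hne)
  -- (i)(b)
  have hib : (K \ S).Nonempty := by
    rw [Set.nonempty_iff_ne_empty]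
    intro he
    have hKS : K ⊆ S := Set.diff_eq_empty.mp he
    apply hSnc
    have key : ∀ x ∈ S, ∃ k ∈ K, Rel G S x k := by
      intro x hx
      by_cases hxK : x ∈ K
      · exact ⟨x, hxK, Rel.refl x⟩
      · obtain ⟨u, huK, hadj⟩ := hdom x hxK
        exact ⟨u, huK, rel_adj hx (hKS huK) hadj⟩
    intro x y hx hy
    obtain ⟨kx, hkx, hrx⟩ := key x hx
    obtain ⟨ky, hky, hry⟩ := key y hy
    have hkk : Rel G S kx ky := by
      rcases eq_or_ne kx ky with rfl | hne
      · exact Rel.refl kx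
      · exact rel_adj (hKS hkx) (hKS hky) (hK hkx hky hne)
    exact (hrx.trans hkk).trans hry.symm
  -- (i)(c)
  have hic : (S ∩ K).Nonempty := by
    rw [Set.nonempty_iff_ne_empty]
    intro he
    have hKSc : K ⊆ Sᶜ := fun k hk hkS =>
      Set.eq_empty_iff_forall_notMem.mp he k ⟨hkS, hk⟩
    refine onecomp G w S hG hw hlt hS hmin ?_ hSnc
    have key : ∀ x ∈ Sᶜ, ∃ k ∈ K, Rel G Sᶜ x k := by
      intro x hx
      by_cases hxK : x ∈ K
      · exact ⟨x, hxK, Rel.refl x⟩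
      · obtain ⟨u, huK, hadj⟩ := hdom x hxK
        exact ⟨u, huK, rel_adj hx (hKSc huK) hadj⟩
    intro x y hx hy
    obtain ⟨kx, hkx, hrx⟩ := key x hx
    obtain ⟨ky, hky, hry⟩ := key y hy
    have hkk : Rel G Sᶜ kx ky := by
      rcases eq_or_ne kx ky with rfl | hne
      · exact Rel.refl kx
      · exact rel_adj (hKSc hkx) (hKSc hky) (hK hkx hky hne)
    exact (hrx.trans hkk).trans hry.symm
  refine ⟨⟨hia, hib, hic⟩, ?_⟩
  -- Part (ii)
  intro C hC
  obtain ⟨u₁, v₁, hu₁, hv₁, hadj₁⟩ := hbound C hC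
  obtain ⟨D₁, hD₁, hvD₁⟩ := exists_comp (G := G) hv₁
  have hTouch₁ : Touches G C D₁ := ⟨u₁, hu₁, v₁, hvD₁, hadj₁⟩
  by_contra h2
  have hOnly : ∀ D, IsComponentOf G Sᶜ D → Touches G C D → D = D₁ := by
    intro D hD hT
    by_contra hne
    exact h2 ⟨D₁, D, hD₁, hD, fun h => hne h.symm, hTouch₁, hT⟩
  obtain ⟨k₀, hk₀K, hk₀S⟩ := hib
  have hk₀c : k₀ ∈ Sᶜ := hk₀S
  obtain ⟨Dstar, hDstar, hk₀D⟩ := exists_comp (G := G) hk₀c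
  have hKSsub : K \ S ⊆ Dstar := by
    rintro k ⟨hkK, hkS⟩
    rcases eq_or_ne k k₀ with rfl | hne
    · exact hk₀D
    · exact comp_closed hDstar hk₀D (hkS : k ∈ Sᶜ) (hK hk₀K hkK (Ne.symm hne))
  obtain ⟨k₁, hk₁S, hk₁K⟩ := hic
  obtain ⟨CK, hCK, hk₁CK⟩ := exists_comp (G := G) hk₁S
  have hSKsub : S ∩ K ⊆ CK := by
    rintro k ⟨hkS, hkK⟩
    rcases eq_or_ne k₁ k with rfl | hne
    · exact hk₁CK
    · exact comp_closed hCK hk₁CK hkS (hK hk₁K hkK hne)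
  -- every component of S touches Dstar
  have hTouchDstar : ∀ C', IsComponentOf G S C' →
      ∃ u, u ∈ C' ∧ ∃ v, v ∈ Dstar ∧ G.Adj u v := by
    intro C' hC'
    by_cases hCK' : (C' ∩ K).Nonempty
    · obtain ⟨x, hxC, hxK⟩ := hCK'
      have hne : x ≠ k₀ := fun h => hk₀S (h ▸ comp_subset hC' hxC)
      exact ⟨x, hxC, k₀, hk₀D, hK hxK hk₀K hne⟩
    · obtain ⟨x, hxC⟩ := comp_nonempty hC'
      have hxK : x ∉ K := fun h => hCK' ⟨x, hxC, h⟩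
      obtain ⟨u, huK, hadj⟩ := hdom x hxK
      by_cases huS : u ∈ S
      · exact absurd ⟨u, comp_closed hC' hxC huS hadj, huK⟩ hCK'
      · exact ⟨x, hxC, u, hKSsub ⟨huK, huS⟩, hadj⟩
  have hCDstar : Touches G C Dstar := by
    obtain ⟨u, hu, v, hv, h⟩ := hTouchDstar C hC
    exact ⟨u, hu, v, hv, h⟩
  have hDeq : Dstar = D₁ := hOnly Dstar hDstar hCDstar
  have hnoCE : ∀ E, IsComponentOf G Sᶜ E → E ≠ Dstar → ¬ Touches G C E := by
    intro E hE hne hT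
    exact hne ((hOnly E hE hT).trans hDeq.symm)
  have hd_le_a : setWeight w Dstar ≤ setWeight w C := hS.2.2 C Dstar hC hDstar hCDstar
  -- components of Sᶜ other than Dstar touch CK and have smaller weight
  have hECK : ∀ E, IsComponentOf G Sᶜ E → E ≠ Dstar →
      (∃ u, u ∈ CK ∧ ∃ x, x ∈ E ∧ G.Adj u x) ∧ setWeight w E ≤ setWeight w CK := by
    intro E hE hne
    obtain ⟨x, hxE⟩ := comp_nonempty hE
    have hxS : x ∈ Sᶜ := comp_subset hE hxE
    have hxK : x ∉ K := by
      intro hxK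
      exact hne (comp_eq_of_mem hE hDstar hxE (hKSsub ⟨hxK, hxS⟩))
    obtain ⟨u, huK, hadj⟩ := hdom x hxK
    by_cases huS : u ∈ S
    · have huCK : u ∈ CK := hSKsub ⟨huS, huK⟩
      exact ⟨⟨u, huCK, x, hxE, hadj.symm⟩, hS.2.2 CK E hCK hE ⟨u, huCK, x, hxE, hadj.symm⟩⟩
    · have huE : u ∈ E := comp_closed hE hxE (huS : u ∈ Sᶜ) hadj
      exact absurd (comp_eq_of_mem hE hDstar huE (hKSsub ⟨huK, huS⟩)) hne
  -- the finset of other components of Sᶜ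
  have hfinF : {E | IsComponentOf G Sᶜ E ∧ E ≠ Dstar}.Finite := Set.toFinite _
  set F : Finset (Set V) := hfinF.toFinset with hFdef
  have hmemF : ∀ E, E ∈ F ↔ IsComponentOf G Sᶜ E ∧ E ≠ Dstar := by
    intro E
    rw [hFdef, Set.Finite.mem_toFinset]
    rfl
  by_cases hFe : F = ∅
  · -- Sᶜ has a single component, apply onecomp
    refine onecomp G w S hG hw hlt hS hmin ?_ hSnc
    have hall : ∀ p, p ∈ Sᶜ → p ∈ Dstar := by
      intro p hp
      obtain ⟨Ep, hEp, hpEp⟩ := exists_comp (G := G) hp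
      by_cases h : Ep = Dstar
      · exact h ▸ hpEp
      · exact absurd ((hmemF Ep).mpr ⟨hEp, h⟩) (by simp [hFe])
    intro p q hp hq
    exact rel_mono (comp_subset hDstar) (comp_preconn hDstar (hall p hp) (hall q hq))
  · obtain ⟨E₀, hE₀F⟩ := Finset.nonempty_of_ne_empty hFe
    obtain ⟨hE₀c, hE₀ne⟩ := (hmemF E₀).mp hE₀F
    -- C is not CK
    have hCneCK : C ≠ CK := by
      intro hEq
      obtain ⟨⟨u, huCK, x, hxE, hadj⟩, _⟩ := hECK E₀ hE₀c hE₀ne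
      exact hnoCE E₀ hE₀c hE₀ne ⟨u, hEq ▸ huCK, x, hxE, hadj⟩
    have hCKsub : CK ⊆ S \ C := fun q hq =>
      ⟨comp_subset hCK hq, fun hqC => hCneCK (comp_eq_of_mem hC hCK hqC hq)⟩
    have hCKb : setWeight w CK ≤ setWeight w (S \ C) := setWeight_mono hw hCKsub
    have hab : setWeight w (S \ C) = setWeight w S - setWeight w C :=
      setWeight_diff hw (comp_subset hC)
    -- disjointness facts
    have hdisjF : ∀ X ∈ F, ∀ Y ∈ F, X ≠ Y → Disjoint X Y := fun X hX Y hY hne =>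
      comp_disjoint ((hmemF X).mp hX).1 ((hmemF Y).mp hY).1 hne
    by_cases hcaseB :
        setWeight w (S \ C) + setWeight w Dstar + ∑ E ∈ F, setWeight w E < setWeight w C
    · -- C itself is a connected safe set of weight < setWeight w S
      have hScEq : Sᶜ = Dstar ∪ ⋃₀ ↑F := by
        ext p
        constructor
        · intro hp
          obtain ⟨Ep, hEp, hpEp⟩ := exists_comp (G := G) hp
          by_cases h : Ep = Dstar
          · exact Or.inl (h ▸ hpEp)
          · exact Or.inr ⟨Ep, (hmemF Ep).mpr ⟨hEp, h⟩, hpEp⟩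
        · intro hp
          rcases hp with hp | ⟨Ep, hEpF, hpEp⟩
          · exact comp_subset hDstar hp
          · exact comp_subset ((hmemF Ep).mp (by exact_mod_cast hEpF)).1 hpEp
      have hdisjDU : Disjoint Dstar (⋃₀ ↑F) := by
        rw [Set.disjoint_sUnion_right]
        intro t ht
        have := (hmemF t).mp (by exact_mod_cast ht)
        exact comp_disjoint hDstar this.1 (Ne.symm this.2)
      have hwSc : setWeight w Sᶜ =
          setWeight w Dstar + ∑ E ∈ F, setWeight w E := by
        rw [hScEq, setWeight_union hdisjDU, setWeight_sUnion F hdisjF]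
      have hCcEq : Cᶜ = (S \ C) ∪ Sᶜ := by
        ext p
        simp only [Set.mem_compl_iff, Set.mem_union, Set.mem_diff]
        constructor
        · intro hp
          by_cases hpS : p ∈ S
          · exact Or.inl ⟨hpS, hp⟩
          · exact Or.inr hpS
        · rintro (⟨_, hp⟩ | hp)
          · exact hp
          · exact fun hc => hp (comp_subset hC hc)
      have hwCc : setWeight w Cᶜ = setWeight w (S \ C) + setWeight w Sᶜ := by
        rw [hCcEq, setWeight_union (Set.disjoint_left.mpr fun a ha hac =>
          (Set.mem_compl_iff _ _).mp hac ha.1)]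
      have hCsafe : IsSafeSet G w C := by
        refine isSafeSet_of_conn G w (comp_nonempty hC) ?_
          (fun x y hx hy => comp_preconn hC hx hy) ?_
        · intro h
          exact hk₀S (comp_subset hC (h ▸ Set.mem_univ k₀))
        · intro X hX
          calc setWeight w X ≤ setWeight w Cᶜ := setWeight_mono hw (comp_subset hX)
            _ ≤ setWeight w C := by rw [hwCc, hwSc]; linarith
      exact contra G w S hw hlt hmin C hCsafe (fun x y hx hy => comp_preconn hC hx hy)
        (setWeight_mono hw (comp_subset hC))
    · -- choose a minimal subfamily of F
      push_neg at hcaseB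
      set P : Finset (Finset (Set V)) := F.powerset.filter
        (fun B => setWeight w C ≤
          setWeight w (S \ C) + setWeight w Dstar + ∑ E ∈ B, setWeight w E) with hPdef
      have hFP : F ∈ P := by
        rw [hPdef, Finset.mem_filter]
        exact ⟨Finset.mem_powerset_self F, hcaseB⟩
      obtain ⟨B, hBP, hBmin⟩ := Finset.exists_min_image P Finset.card ⟨F, hFP⟩
      rw [hPdef, Finset.mem_filter, Finset.mem_powerset] at hBP
      obtain ⟨hBF, hBw⟩ := hBP
      have hmemB : ∀ E, E ∈ B → IsComponentOf G Sᶜ E ∧ E ≠ Dstar :=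
        fun E hE => (hmemF E).mp (hBF hE)
      -- upper bound on the weight
      have hupper : setWeight w (S \ C) + setWeight w Dstar + ∑ E ∈ B, setWeight w E ≤
          setWeight w C + setWeight w (S \ C) := by
        rcases B.eq_empty_or_nonempty with rfl | ⟨E₀', hE₀'⟩
        · simp only [Finset.sum_empty, add_zero]
          linarith
        · have hcard := Finset.card_erase_lt_of_mem hE₀'
          have hBer : B.erase E₀' ∉ P := fun h => absurd (hBmin _ h) (not_le.mpr hcard)
          rw [hPdef, Finset.mem_filter, Finset.mem_powerset] at hBer
          push_neg at hBer
          have hlt' := hBer ((B.erase_subset E₀').trans hBF)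
          have hsum : ∑ E ∈ B.erase E₀', setWeight w E + setWeight w E₀' =
              ∑ E ∈ B, setWeight w E := Finset.sum_erase_add B _ hE₀'
          obtain ⟨hE₀c', hE₀ne'⟩ := hmemB E₀' hE₀'
          have hwE₀ : setWeight w E₀' ≤ setWeight w CK := (hECK E₀' hE₀c' hE₀ne').2
          linarith
      set T : Set V := (S \ C) ∪ (Dstar ∪ ⋃₀ ↑B) with hTdef
      have hDT : Dstar ⊆ T := fun q hq => Or.inr (Or.inl hq)
      have hSCT : S \ C ⊆ T := fun q hq => Or.inl hq
      have hBT : ∀ E, E ∈ B → E ⊆ T := fun E hE q hq =>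
        Or.inr (Or.inr ⟨E, by exact_mod_cast hE, hq⟩)
      -- weight of T
      have hdisjDB : Disjoint Dstar (⋃₀ ↑B) := by
        rw [Set.disjoint_sUnion_right]
        intro t ht
        have := hmemB t (by exact_mod_cast ht)
        exact comp_disjoint hDstar this.1 (Ne.symm this.2)
      have hsubSc : Dstar ∪ ⋃₀ ↑B ⊆ Sᶜ := by
        rintro q (hq | ⟨E, hE, hq⟩)
        · exact comp_subset hDstar hq
        · exact comp_subset (hmemB E (by exact_mod_cast hE)).1 hq
      have hwT : setWeight w T = setWeight w (S \ C) +
          (setWeight w Dstar + ∑ E ∈ B, setWeight w E) := by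
        rw [hTdef, setWeight_union (Set.disjoint_left.mpr fun a ha hac =>
            (Set.mem_compl_iff _ _).mp (hsubSc hac) ha.1),
          setWeight_union hdisjDB,
          setWeight_sUnion B (fun X hX Y hY hne => hdisjF X (hBF hX) Y (hBF hY) hne)]
      -- connectivity of T
      have keySC : ∀ p, p ∈ S \ C → Rel G T p k₀ := by
        intro p hp
        obtain ⟨Cp, hCp, hpCp⟩ := exists_comp (G := G) hp.1
        have hCpne : Cp ≠ C := fun he => hp.2 (he ▸ hpCp)
        have hCpsub : Cp ⊆ S \ C := fun q hq =>
          ⟨comp_subset hCp hq, fun hqC => hCpne (comp_eq_of_mem hCp hC hq hqC)⟩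
        obtain ⟨u, hu, v, hv, hadj⟩ := hTouchDstar Cp hCp
        have h1 : Rel G T p u := rel_mono (hCpsub.trans hSCT) (comp_preconn hCp hpCp hu)
        have h2 : Rel G T u v := rel_adj (hSCT (hCpsub hu)) (hDT hv) hadj
        have h3 : Rel G T v k₀ := rel_mono hDT (comp_preconn hDstar hv hk₀D)
        exact (h1.trans h2).trans h3
      have hTpre : ∀ x y, x ∈ T → y ∈ T → Rel G T x y := by
        have key : ∀ p, p ∈ T → Rel G T p k₀ := by
          rintro p (hp | hp | ⟨E, hEB, hpE⟩)
          · exact keySC p hp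
          · exact rel_mono hDT (comp_preconn hDstar hp hk₀D)
          · have hEB' : E ∈ B := by exact_mod_cast hEB
            obtain ⟨hEc, hEne⟩ := hmemB E hEB'
            obtain ⟨⟨u, huCK, x, hxE, hadj⟩, _⟩ := hECK E hEc hEne
            have h1 : Rel G T p x := rel_mono (hBT E hEB') (comp_preconn hEc hpE hxE)
            have h2 : Rel G T x u := rel_adj (hBT E hEB' hxE) (hSCT (hCKsub huCK)) hadj.symm
            exact (h1.trans h2).trans (keySC u (hCKsub huCK))
        intro x y hx hy
        exact (key x hx).trans (key y hy).symm
      -- C is contained in Tᶜ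
      have hCTc : ∀ q, q ∈ C → q ∉ T := by
        rintro q hq (h | h)
        · exact h.2 hq
        · exact (Set.mem_compl_iff _ _).mp (hsubSc h) (comp_subset hC hq)
      -- safety of T
      have hTsafe : IsSafeSet G w T := by
        refine isSafeSet_of_conn G w ⟨k₀, hDT hk₀D⟩ ?_ hTpre ?_
        · intro h
          obtain ⟨x₁, hx₁⟩ := comp_nonempty hC
          exact hCTc x₁ hx₁ (h ▸ Set.mem_univ x₁)
        · intro X hX
          obtain ⟨x, hxX⟩ := comp_nonempty hX
          have hxTc : x ∈ Tᶜ := comp_subset hX hxX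
          have hwTb : setWeight w (S \ C) ≤ setWeight w T := by
            have h1 := setWeight_nonneg hw Dstar
            have h2 : (0:ℝ) ≤ ∑ E ∈ B, setWeight w E :=
              Finset.sum_nonneg fun E _ => setWeight_nonneg hw E
            rw [hwT]; linarith
          by_cases hxS : x ∈ S
          · -- X ⊆ C
            have hxC : x ∈ C := by
              by_contra hxC
              exact (Set.mem_compl_iff _ _).mp hxTc (hSCT ⟨hxS, hxC⟩)
            have hXC : X ⊆ C := by
              refine comp_subset_of_closed hX hxX hxC ?_
              intro u' v' hu' hv' hadj'
              by_cases hv'S : v' ∈ S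
              · by_contra hv'C
                exact (Set.mem_compl_iff _ _).mp hv' (hSCT ⟨hv'S, hv'C⟩)
              · have hv'c : v' ∈ Sᶜ := hv'S
                obtain ⟨Ev, hEv, hv'Ev⟩ := exists_comp (G := G) hv'c
                have : Ev = Dstar := ((hOnly Ev hEv ⟨u', hu', v', hv'Ev, hadj'⟩).trans hDeq.symm)
                exact absurd (hDT (this ▸ hv'Ev)) ((Set.mem_compl_iff _ _).mp hv')
            calc setWeight w X ≤ setWeight w C := setWeight_mono hw hXC
              _ ≤ setWeight w T := by rw [hwT]; linarith
          · have hxc : x ∈ Sᶜ := hxS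
            obtain ⟨Ex, hEx, hxEx⟩ := exists_comp (G := G) hxc
            have hExne : Ex ≠ Dstar := by
              intro h
              exact (Set.mem_compl_iff _ _).mp hxTc (hDT (h ▸ hxEx))
            have hExB : Ex ∉ B := by
              intro h
              exact (Set.mem_compl_iff _ _).mp hxTc (hBT Ex h hxEx)
            have hXEx : X ⊆ Ex := by
              refine comp_subset_of_closed hX hxX hxEx ?_
              intro u' v' hu' hv' hadj'
              by_cases hv'S : v' ∈ S
              · have hv'C : v' ∈ C := by
                  by_contra hv'C
                  exact (Set.mem_compl_iff _ _).mp hv' (hSCT ⟨hv'S, hv'C⟩)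
                exact absurd ⟨v', hv'C, u', hu', hadj'.symm⟩ (hnoCE Ex hEx hExne)
              · exact comp_closed hEx hu' (hv'S : v' ∈ Sᶜ) hadj'
            have hwEx : setWeight w Ex ≤ setWeight w CK := (hECK Ex hEx hExne).2
            calc setWeight w X ≤ setWeight w Ex := setWeight_mono hw hXEx
              _ ≤ setWeight w CK := hwEx
              _ ≤ setWeight w (S \ C) := hCKb
              _ ≤ setWeight w T := hwTb
      refine contra G w S hw hlt hmin T hTsafe hTpre ?_
      rw [hwT]
      linarith
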